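/- arXiv:1910.08411 — 4 statements merged into one kernel-verified Lean document; each statement's English description precedes it below -/
import Mathlib

section
/- For every real number β with 0 < β ≤ 4/27, setting φ(t) := t·(1 − 3β − 3β²t − β³t²), t_max := (−3 + √(4/β − 3))/(2β) and t₀ := (−3 + √(3/β))/(3β), one has 0 < t₀ < t_max, t₀ is a critical point of φ (i.e. φ'(t₀) = 0), and φ(t₀) ≥ 1. -/
set_option maxHeartbeats 1600000 in
/-- For `0 < β ≤ 4/27`, with `φ(t) = t(1 − 3β − 3β²t − β³t²)`,
`t_max = (−3 + √(4/β − 3))/(2β)` and `t₀ = (−3 + √(3/β))/(3β)`, one has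
`0 < t₀ < t_max`, `φ'(t₀) = 0`, and `φ(t₀) ≥ 1`. -/
theorem phi_critical_point (β : ℝ) (hβ0 : 0 < β) (hβ : β ≤ 4 / 27)
    (φ : ℝ → ℝ) (hφ : φ = fun t => t * (1 - 3 * β - 3 * β ^ 2 * t - β ^ 3 * t ^ 2))
    (tmax : ℝ) (htmax : tmax = (-3 + Real.sqrt (4 / β - 3)) / (2 * β))
    (t₀ : ℝ) (ht₀ : t₀ = (-3 + Real.sqrt (3 / β)) / (3 * β)) :
    0 < t₀ ∧ t₀ < tmax ∧ deriv φ t₀ = 0 ∧ 1 ≤ φ t₀ := by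
  set s := Real.sqrt (3 / β) with hs_def
  have hs2 : s ^ 2 = 3 / β := Real.sq_sqrt (by positivity)
  have hsb : β * s ^ 2 = 3 := by rw [hs2]; field_simp
  have hs92 : (9 : ℝ) / 2 ≤ s := by
    have h1 : ((9:ℝ)/2) ^ 2 ≤ 3 / β := by
      rw [le_div_iff₀ hβ0]
      nlinarith
    calc (9:ℝ)/2 = Real.sqrt (((9:ℝ)/2)^2) := by
          rw [Real.sqrt_sq (by norm_num)]
      _ ≤ s := Real.sqrt_le_sqrt h1
  have hs0 : (0:ℝ) < s := by linarith
  have ht0pos : 0 < t₀ := by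
    rw [ht₀]
    apply div_pos (by linarith) (by linarith)
  -- u for tmax
  have hu2 : Real.sqrt (4 / β - 3) ^ 2 = 4 / β - 3 := by
    apply Real.sq_sqrt
    have : (3:ℝ) ≤ 4 / β := by
      rw [le_div_iff₀ hβ0]; nlinarith
    linarith
  set u := Real.sqrt (4 / β - 3) with hu_def
  have hu0 : 0 ≤ u := Real.sqrt_nonneg _
  have hub : β * u ^ 2 = 4 - 3 * β := by
    rw [hu2]; field_simp
  have hlt : t₀ < tmax := by
    rw [ht₀, htmax]
    rw [div_lt_div_iff₀ (by linarith) (by linarith)]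
    -- (-3 + s) * (2β) < (-3 + u) * (3β)  ⟺  2s + 3 < 3u
    have key : 2 * s + 3 < 3 * u := by
      nlinarith [sq_nonneg (3 * u - (2 * s + 3)), sq_nonneg (s - 3), hsb, hub,
        mul_pos hβ0 hs0, mul_pos hβ0 (mul_pos hs0 hs0)]
    nlinarith
  -- derivative
  have H : HasDerivAt φ (1 - 3 * β - 6 * β ^ 2 * t₀ - 3 * β ^ 3 * t₀ ^ 2) t₀ := by
    rw [hφ]
    have h1 : HasDerivAt (fun t : ℝ => t * (1 - 3 * β - 3 * β ^ 2 * t - β ^ 3 * t ^ 2))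
        (1 * (1 - 3 * β - 3 * β ^ 2 * t₀ - β ^ 3 * t₀ ^ 2) +
          t₀ * (0 - 0 - 3 * β ^ 2 * 1 - β ^ 3 * (2 * t₀ ^ 1))) t₀ := by
      exact (hasDerivAt_id t₀).mul
        ((((hasDerivAt_const t₀ (1:ℝ)).sub (hasDerivAt_const t₀ (3 * β))).sub
          ((hasDerivAt_id t₀).const_mul (3 * β ^ 2))).sub
          ((hasDerivAt_pow 2 t₀).const_mul (β ^ 3)))
    convert h1 using 1; ring
  have hbt : β * t₀ = (-3 + s) / 3 := by
    rw [ht₀]; field_simp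
  have hderiv : deriv φ t₀ = 0 := by
    rw [H.deriv]
    have e1 : 6 * β ^ 2 * t₀ = 6 * β * (β * t₀) := by ring
    have e2 : 3 * β ^ 3 * t₀ ^ 2 = 3 * β * (β * t₀) ^ 2 := by ring
    rw [e1, e2, hbt]
    field_simp
    nlinarith [hsb]
  refine ⟨ht0pos, hlt, hderiv, ?_⟩
  simp only [hφ, ht₀]
  have key : (s - 3) ^ 2 * (2 * s + 3) - 27 = s ^ 2 * (2 * s - 9) := by ring
  have hnn : (0:ℝ) ≤ s ^ 2 * (2 * s - 9) := by nlinarith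
  have hval : ((-3 + s) / (3 * β)) *
      (1 - 3 * β - 3 * β ^ 2 * ((-3 + s) / (3 * β)) - β ^ 3 * ((-3 + s) / (3 * β)) ^ 2)
      = (s - 3) * (2 - 3 * β - β * s) / (9 * β) := by
    field_simp
    linear_combination (27 - 9 * s) * hsb
  rw [hval, le_div_iff₀ (by positivity)]
  nlinarith [hsb, hnn, hs0, mul_pos hs0 hs0, sq_nonneg s]
end

section
/- Let k be a natural number, l > 0, and let f : [0, l] → ℝ be of class C^{k+1}. If f vanishes at k + 1 pairwise distinct points of [0, l], then (∫₀^l f(x)² dx)^{1/2} ≤ l^{k+1} (∫₀^l (f^{(k+1)}(x))² dx)^{1/2}. -/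
open MeasureTheory

/-- FTC bound: if `g` is continuous on `[0,l]`, has derivative `g'` on `(0,l)`,
and vanishes at some point of `[0,l]`, then `|g t| ≤ ∫₀^l |g'|`. -/
lemma lemA {l : ℝ} (hl : 0 < l) {g g' : ℝ → ℝ}
    (hgc : ContinuousOn g (Set.Icc 0 l))
    (hg'c : ContinuousOn g' (Set.Icc 0 l))
    (hd : ∀ u ∈ Set.Ioo (0:ℝ) l, HasDerivAt g (g' u) u)
    {ξ : ℝ} (hξ : ξ ∈ Set.Icc (0:ℝ) l) (hgξ : g ξ = 0) :
    ∀ t ∈ Set.Icc (0:ℝ) l, |g t| ≤ ∫ u in (0:ℝ)..l, |g' u| := by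
  intro t ht
  have huIcc : Set.uIcc ξ t ⊆ Set.Icc 0 l := by
    rw [show Set.Icc (0:ℝ) l = Set.uIcc 0 l from (Set.uIcc_of_le hl.le).symm]
    exact Set.uIcc_subset_uIcc ((Set.uIcc_of_le hl.le).symm ▸ hξ)
      ((Set.uIcc_of_le hl.le).symm ▸ ht)
  have hIoo : Set.Ioo (min ξ t) (max ξ t) ⊆ Set.Ioo 0 l := by
    intro u hu
    constructor
    · exact lt_of_le_of_lt (le_min hξ.1 ht.1) hu.1
    · exact lt_of_lt_of_le hu.2 (max_le hξ.2 ht.2)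
  have hint : IntervalIntegrable g' volume ξ t :=
    (hg'c.mono huIcc).intervalIntegrable
  have ftc : ∫ u in ξ..t, g' u = g t - g ξ :=
    intervalIntegral.integral_eq_sub_of_hasDeriv_right (hgc.mono huIcc)
      (fun u hu => (hd u (hIoo hu)).hasDerivWithinAt) hint
  have habs : |g t| = |∫ u in ξ..t, g' u| := by rw [ftc, hgξ, sub_zero]
  have hintabs : IntervalIntegrable (fun u => |g' u|) volume 0 l := by
    apply ContinuousOn.intervalIntegrable
    rw [Set.uIcc_of_le hl.le]
    exact hg'c.abs
  rw [habs]
  rcases le_total ξ t with h | h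
  · calc |∫ u in ξ..t, g' u| ≤ ∫ u in ξ..t, |g' u| :=
          intervalIntegral.abs_integral_le_integral_abs h
      _ ≤ ∫ u in (0:ℝ)..l, |g' u| :=
          intervalIntegral.integral_mono_interval hξ.1 h ht.2
            (Filter.Eventually.of_forall fun u => abs_nonneg _) hintabs
  · rw [intervalIntegral.integral_symm, abs_neg]
    calc |∫ u in t..ξ, g' u| ≤ ∫ u in t..ξ, |g' u| :=
          intervalIntegral.abs_integral_le_integral_abs h
      _ ≤ ∫ u in (0:ℝ)..l, |g' u| :=
          intervalIntegral.integral_mono_interval ht.1 h hξ.2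
            (Filter.Eventually.of_forall fun u => abs_nonneg _) hintabs

/-- Iterated Rolle + FTC: if `g` is `C^{n+1}` on `[0,l]` and vanishes at `n+1`
points of `[0,l]` (given in increasing order), then
`|g t| ≤ l^n ∫₀^l |g^{(n+1)}|` for all `t ∈ [0,l]`. -/
lemma main_aux (l : ℝ) (hl : 0 < l) :
    ∀ (n : ℕ) (g : ℝ → ℝ), ContDiffOn ℝ (n + 1 : ℕ) g (Set.Icc 0 l) →
      ∀ y : Fin (n + 1) → ℝ, StrictMono y → (∀ i, y i ∈ Set.Icc (0:ℝ) l) →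
      (∀ i, g (y i) = 0) →
      ∀ t ∈ Set.Icc (0:ℝ) l,
        |g t| ≤ l ^ n * ∫ u in (0:ℝ)..l, |iteratedDerivWithin (n + 1) g (Set.Icc 0 l) u| := by
  have uds : UniqueDiffOn ℝ (Set.Icc (0:ℝ) l) := uniqueDiffOn_Icc hl
  intro n
  induction n with
  | zero =>
    intro g hg y _ hymem hyz t ht
    have hgc : ContinuousOn g (Set.Icc 0 l) := hg.continuousOn
    have hg'c : ContinuousOn (derivWithin g (Set.Icc 0 l)) (Set.Icc 0 l) := by
      have := hg.continuousOn_derivWithin uds (by norm_num)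
      exact this
    have hd : ∀ u ∈ Set.Ioo (0:ℝ) l, HasDerivAt g (derivWithin g (Set.Icc 0 l) u) u := by
      intro u hu
      have hmem : u ∈ Set.Icc (0:ℝ) l := Set.Ioo_subset_Icc_self hu
      have hdw : DifferentiableWithinAt ℝ g (Set.Icc 0 l) u :=
        (hg.differentiableOn (by norm_num)) u hmem
      exact hdw.hasDerivWithinAt.hasDerivAt (Icc_mem_nhds hu.1 hu.2)
    have key := lemA hl hgc hg'c hd (hymem 0) (hyz 0) t ht
    have hcongr : ∀ u ∈ Set.uIcc (0:ℝ) l,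
        |iteratedDerivWithin 1 g (Set.Icc 0 l) u| = |derivWithin g (Set.Icc 0 l) u| := by
      intro u hu
      rw [Set.uIcc_of_le hl.le] at hu
      rw [iteratedDerivWithin_one]
    rw [pow_zero, one_mul,
      intervalIntegral.integral_congr (fun u hu => hcongr u hu)]
    exact key
  | succ n ih =>
    intro g hg y hymono hymem hyz t ht
    set s := Set.Icc (0:ℝ) l with hs
    have hgc : ContinuousOn g s := hg.continuousOn
    -- derivative of g
    set g1 := derivWithin g s with hg1def
    have hg1 : ContDiffOn ℝ (n + 1 : ℕ) g1 s := by
      apply hg.derivWithin uds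
      norm_cast
    have hd : ∀ u ∈ Set.Ioo (0:ℝ) l, HasDerivAt g (g1 u) u := by
      intro u hu
      have hmem : u ∈ s := Set.Ioo_subset_Icc_self hu
      have hdw : DifferentiableWithinAt ℝ g s u := by
        apply (hg.differentiableOn ?_) u hmem
        · norm_cast
      exact hdw.hasDerivWithinAt.hasDerivAt (Icc_mem_nhds hu.1 hu.2)
    -- Rolle: zeros of g1 between consecutive zeros of g
    have rolle : ∀ i : Fin (n + 1), ∃ c ∈ Set.Ioo (y i.castSucc) (y i.succ), g1 c = 0 := by
      intro i
      have hab : y i.castSucc < y i.succ := hymono Fin.castSucc_lt_succ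
      have hsub : Set.Icc (y i.castSucc) (y i.succ) ⊆ s :=
        Set.Icc_subset_Icc (hymem i.castSucc).1 (hymem i.succ).2
      have hsub' : Set.Ioo (y i.castSucc) (y i.succ) ⊆ Set.Ioo 0 l := by
        intro u hu
        exact ⟨lt_of_le_of_lt (hymem i.castSucc).1 hu.1,
          lt_of_lt_of_le hu.2 (hymem i.succ).2⟩
      exact exists_hasDerivAt_eq_zero hab (hgc.mono hsub)
        (by rw [hyz i.castSucc, hyz i.succ])
        (fun u hu => hd u (hsub' hu))
    choose z hzmem hzzero using rolle
    have hzmono : StrictMono z := by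
      rw [Fin.strictMono_iff_lt_succ]
      intro i
      calc z i.castSucc < y i.castSucc.succ := (hzmem i.castSucc).2
        _ = y i.succ.castSucc := by rw [Fin.succ_castSucc]
        _ < z i.succ := (hzmem i.succ).1
    have hzin : ∀ i, z i ∈ s := by
      intro i
      exact ⟨le_of_lt (lt_of_le_of_lt (hymem i.castSucc).1 (hzmem i).1),
        le_of_lt (lt_of_lt_of_le (hzmem i).2 (hymem i.succ).2)⟩
    -- apply IH to g1
    have IH := ih g1 hg1 z hzmono hzin hzzero
    -- rewrite iterated derivative of g1
    have hiter : ∀ u ∈ s,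
        iteratedDerivWithin (n + 1) g1 s u = iteratedDerivWithin (n + 2) g s u := by
      intro u hu
      exact (congrFun (iteratedDerivWithin_succ' (n := n + 1) (f := g) (s := s)) u).symm
    set B := ∫ u in (0:ℝ)..l, |iteratedDerivWithin (n + 2) g s u| with hB
    have hintB : ∫ u in (0:ℝ)..l, |iteratedDerivWithin (n + 1) g1 s u| = B := by
      apply intervalIntegral.integral_congr
      intro u hu
      rw [Set.uIcc_of_le hl.le] at hu
      dsimp only
      rw [hiter u hu]
    rw [hintB] at IH
    -- continuity of g1 and its L¹ bound
    have hg1c : ContinuousOn g1 s := hg1.continuousOn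
    have key := lemA hl hgc hg1c hd (hymem 0) (hyz 0) t ht
    have hintg1 : IntervalIntegrable (fun u => |g1 u|) volume 0 l := by
      apply ContinuousOn.intervalIntegrable
      rw [Set.uIcc_of_le hl.le]
      exact hg1c.abs
    have hintconst : IntervalIntegrable (fun _ : ℝ => l ^ n * B) volume 0 l :=
      intervalIntegrable_const
    have hmono : (∫ u in (0:ℝ)..l, |g1 u|) ≤ ∫ _u in (0:ℝ)..l, l ^ n * B :=
      intervalIntegral.integral_mono_on hl.le hintg1 hintconst (fun u hu => IH u hu)
    have hconst : (∫ _u in (0:ℝ)..l, l ^ n * B) = l * (l ^ n * B) := by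
      rw [intervalIntegral.integral_const, smul_eq_mul, sub_zero]
    calc |g t| ≤ ∫ u in (0:ℝ)..l, |g1 u| := key
      _ ≤ ∫ _u in (0:ℝ)..l, l ^ n * B := hmono
      _ = l ^ (n + 1) * B := by rw [hconst]; ring

/-- If `f : [0,l] → ℝ` is of class `C^{k+1}` and vanishes at `k+1` pairwise
distinct points of `[0,l]`, then
`(∫₀^l f²)^{1/2} ≤ l^{k+1} (∫₀^l (f^{(k+1)})²)^{1/2}`. -/
theorem L2_interp_estimate (k : ℕ) (l : ℝ) (hl : 0 < l) (f : ℝ → ℝ)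
    (hf : ContDiffOn ℝ (k + 1) f (Set.Icc 0 l))
    (x : Fin (k + 1) → ℝ) (hxinj : Function.Injective x)
    (hxmem : ∀ i, x i ∈ Set.Icc (0 : ℝ) l) (hfx : ∀ i, f (x i) = 0) :
    Real.sqrt (∫ t in (0 : ℝ)..l, (f t) ^ 2) ≤
      l ^ (k + 1) *
        Real.sqrt (∫ t in (0 : ℝ)..l, (iteratedDerivWithin (k + 1) f (Set.Icc 0 l) t) ^ 2) := by
  set s := Set.Icc (0:ℝ) l with hsdef
  have uds : UniqueDiffOn ℝ s := uniqueDiffOn_Icc hl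
  -- sort the zeros
  set F : Finset ℝ := Finset.univ.image x with hF
  have hcard : F.card = k + 1 := by
    rw [hF, Finset.card_image_of_injective _ hxinj, Finset.card_univ, Fintype.card_fin]
  set y : Fin (k + 1) → ℝ := fun i => F.orderEmbOfFin hcard i with hy
  have hymono : StrictMono y := (F.orderEmbOfFin hcard).strictMono
  have hyprop : ∀ i, ∃ j, x j = y i := by
    intro i
    have : y i ∈ F := F.orderEmbOfFin_mem hcard i
    rw [hF, Finset.mem_image] at this
    obtain ⟨j, _, hj⟩ := this
    exact ⟨j, hj⟩
  have hymem : ∀ i, y i ∈ s := by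
    intro i; obtain ⟨j, hj⟩ := hyprop i; rw [← hj]; exact hxmem j
  have hyz : ∀ i, f (y i) = 0 := by
    intro i; obtain ⟨j, hj⟩ := hyprop i; rw [← hj]; exact hfx j
  have hf' : ContDiffOn ℝ (k + 1 : ℕ) f s := by exact_mod_cast hf
  -- the pointwise bound
  set h : ℝ → ℝ := iteratedDerivWithin (k + 1) f s with hh
  set A : ℝ := ∫ u in (0:ℝ)..l, |h u| with hA
  have hpoint : ∀ t ∈ s, |f t| ≤ l ^ k * A :=
    main_aux l hl k f hf' y hymono hymem hyz
  set S : ℝ := ∫ t in (0:ℝ)..l, (h t) ^ 2 with hS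
  -- basic integrability / continuity
  have hhc : ContinuousOn h s := hf'.continuousOn_iteratedDerivWithin (by norm_cast) uds
  have hfc : ContinuousOn f s := hf.continuousOn
  have hSnonneg : 0 ≤ S := by
    apply intervalIntegral.integral_nonneg hl.le
    intro u _; positivity
  have hAnonneg : 0 ≤ A := by
    apply intervalIntegral.integral_nonneg hl.le
    intro u _; exact abs_nonneg _
  have hinth2 : IntervalIntegrable (fun u => (h u) ^ 2) volume 0 l := by
    apply ContinuousOn.intervalIntegrable
    rw [Set.uIcc_of_le hl.le]
    exact hhc.pow 2
  have hinthabs : IntervalIntegrable (fun u => |h u|) volume 0 l := by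
    apply ContinuousOn.intervalIntegrable
    rw [Set.uIcc_of_le hl.le]
    exact hhc.abs
  -- Cauchy–Schwarz step: A² ≤ l * S
  have hCS : ∀ c : ℝ, 0 < c → A ≤ (S + l * c ^ 2) / (2 * c) := by
    intro c hc
    have hbound : ∀ u ∈ s, |h u| ≤ ((h u) ^ 2 + c ^ 2) / (2 * c) := by
      intro u _
      rw [le_div_iff₀ (by positivity : (0:ℝ) < 2 * c)]
      nlinarith [sq_nonneg (|h u| - c), sq_abs (h u)]
    have hintrhs : IntervalIntegrable (fun u => ((h u) ^ 2 + c ^ 2) / (2 * c)) volume 0 l :=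
      ((hinth2.add intervalIntegrable_const).div_const _)
    have := intervalIntegral.integral_mono_on hl.le hinthabs hintrhs hbound
    calc A ≤ ∫ u in (0:ℝ)..l, ((h u) ^ 2 + c ^ 2) / (2 * c) := this
      _ = (S + l * c ^ 2) / (2 * c) := by
          rw [intervalIntegral.integral_div, intervalIntegral.integral_add hinth2
            intervalIntegrable_const, intervalIntegral.integral_const, smul_eq_mul, sub_zero]
  have hA2 : A ^ 2 ≤ l * S := by
    rcases eq_or_lt_of_le hSnonneg with hS0 | hSpos
    · -- S = 0 : show A = 0
      have hA0 : A ≤ 0 := by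
        by_contra hco
        push_neg at hco
        have hc : (0:ℝ) < A / l := by positivity
        have := hCS (A / l) hc
        rw [← hS0] at this
        have h2 : (0 + l * (A / l) ^ 2) / (2 * (A / l)) = A / 2 := by
          field_simp
          ring
        rw [h2] at this
        linarith
      have : A = 0 := le_antisymm hA0 hAnonneg
      rw [this, ← hS0]
      norm_num
    · set c := Real.sqrt (S / l) with hc
      have hcpos : 0 < c := Real.sqrt_pos.2 (by positivity)
      have hc2 : c ^ 2 = S / l := Real.sq_sqrt (by positivity)
      have hAle := hCS c hcpos
      have hrw : (S + l * c ^ 2) / (2 * c) = S / c := by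
        rw [hc2]
        field_simp
        ring
      rw [hrw] at hAle
      have : A ^ 2 ≤ (S / c) ^ 2 := by
        apply pow_le_pow_left₀ hAnonneg hAle
      calc A ^ 2 ≤ (S / c) ^ 2 := this
        _ = S ^ 2 / c ^ 2 := by rw [div_pow]
        _ = l * S := by rw [hc2]; field_simp
  -- integrate the pointwise bound
  have hintf2 : IntervalIntegrable (fun u => (f u) ^ 2) volume 0 l := by
    apply ContinuousOn.intervalIntegrable
    rw [Set.uIcc_of_le hl.le]
    exact hfc.pow 2
  have hintF : (∫ t in (0:ℝ)..l, (f t) ^ 2) ≤ l * (l ^ k * A) ^ 2 := by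
    have hb : ∀ u ∈ s, (f u) ^ 2 ≤ (l ^ k * A) ^ 2 := by
      intro u hu
      have := hpoint u hu
      calc (f u) ^ 2 = |f u| ^ 2 := (sq_abs _).symm
        _ ≤ (l ^ k * A) ^ 2 := pow_le_pow_left₀ (abs_nonneg _) this 2
    calc (∫ t in (0:ℝ)..l, (f t) ^ 2) ≤ ∫ _t in (0:ℝ)..l, (l ^ k * A) ^ 2 :=
          intervalIntegral.integral_mono_on hl.le hintf2 intervalIntegrable_const hb
      _ = l * (l ^ k * A) ^ 2 := by
          rw [intervalIntegral.integral_const, smul_eq_mul, sub_zero]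
  -- combine
  have hfinal : (∫ t in (0:ℝ)..l, (f t) ^ 2) ≤ l ^ (2 * (k + 1)) * S := by
    calc (∫ t in (0:ℝ)..l, (f t) ^ 2) ≤ l * (l ^ k * A) ^ 2 := hintF
      _ = l ^ (2 * k + 1) * A ^ 2 := by ring
      _ ≤ l ^ (2 * k + 1) * (l * S) := by
          apply mul_le_mul_of_nonneg_left hA2 (by positivity)
      _ = l ^ (2 * (k + 1)) * S := by ring
  calc Real.sqrt (∫ t in (0:ℝ)..l, (f t) ^ 2)
      ≤ Real.sqrt (l ^ (2 * (k + 1)) * S) := Real.sqrt_le_sqrt hfinal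
    _ = l ^ (k + 1) * Real.sqrt S := by
        rw [Real.sqrt_mul (by positivity), show (2 * (k + 1)) = (k + 1) * 2 by ring,
          pow_mul, Real.sqrt_sq (by positivity)]
end

section
/- Let k be a natural number, l > 0, and let f : [0, l] → ℝ be of class C^{k+1}. If f vanishes at k + 1 pairwise distinct points of [0, l], then sup_{x ∈ [0,l]} |f(x)| ≤ l^{k+1} · sup_{x ∈ [0,l]} |f^{(k+1)}(x)|. -/
open Set

/-- sup of `|h|` over `[0,l]` bounds `|h t|`, for continuous `h`. -/
lemma sup_abs_le_helper {l : ℝ} (hl : 0 < l) {h : ℝ → ℝ}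
    (hc : ContinuousOn h (Set.Icc 0 l)) :
    (∀ t ∈ Set.Icc (0 : ℝ) l, |h t| ≤ sSup ((fun s => |h s|) '' Set.Icc 0 l)) ∧
      0 ≤ sSup ((fun s => |h s|) '' Set.Icc 0 l) := by
  have hbdd : BddAbove ((fun s => |h s|) '' Set.Icc 0 l) :=
    (isCompact_Icc.image_of_continuousOn hc.abs).bddAbove
  have hle : ∀ t ∈ Set.Icc (0 : ℝ) l, |h t| ≤ sSup ((fun s => |h s|) '' Set.Icc 0 l) :=
    fun t ht => le_csSup hbdd (Set.mem_image_of_mem _ ht)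
  refine ⟨hle, le_trans (abs_nonneg (h 0)) (hle 0 ⟨le_refl 0, hl.le⟩)⟩

/-- Mean value step: if `f` vanishes somewhere on `[0,l]` and its derivative within
`[0,l]` is bounded by `C`, then `|f| ≤ l * C` on `[0,l]`. -/
lemma mvt_step {l : ℝ} (hl : 0 < l) {f : ℝ → ℝ}
    (hf : DifferentiableOn ℝ f (Set.Icc 0 l)) {C : ℝ} (hC : 0 ≤ C)
    (hb : ∀ s ∈ Set.Icc (0 : ℝ) l, |derivWithin f (Set.Icc 0 l) s| ≤ C)
    {a : ℝ} (ha : a ∈ Set.Icc (0 : ℝ) l) (hfa : f a = 0) :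
    ∀ t ∈ Set.Icc (0 : ℝ) l, |f t| ≤ l * C := by
  intro t ht
  have key : ‖f t - f a‖ ≤ C * ‖t - a‖ :=
    Convex.norm_image_sub_le_of_norm_derivWithin_le hf
      (fun s hs => by simpa using hb s hs) (convex_Icc 0 l) ha ht
  have h1 : |t - a| ≤ l := by
    rw [abs_sub_le_iff]
    constructor <;> [linarith [ht.1, ht.2, ha.1, ha.2]; linarith [ht.1, ht.2, ha.1, ha.2]]
  calc |f t| = ‖f t - f a‖ := by rw [hfa, sub_zero]; rfl
    _ ≤ C * |t - a| := key
    _ ≤ C * l := by exact mul_le_mul_of_nonneg_left h1 hC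
    _ = l * C := mul_comm _ _

lemma sup_interp_aux : ∀ (n : ℕ) (l : ℝ), 0 < l → ∀ f : ℝ → ℝ,
    ContDiffOn ℝ (n + 1) f (Set.Icc 0 l) →
    ∀ x : Fin (n + 1) → ℝ, Function.Injective x →
    (∀ i, x i ∈ Set.Icc (0 : ℝ) l) → (∀ i, f (x i) = 0) →
    ∀ t ∈ Set.Icc (0 : ℝ) l,
      |f t| ≤ l ^ (n + 1) *
        sSup ((fun s => |iteratedDerivWithin (n + 1) f (Set.Icc 0 l) s|) '' Set.Icc 0 l) := by
  intro n
  induction n with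
  | zero =>
    intro l hl f hf x hxinj hxmem hfx t ht
    have hud : UniqueDiffOn ℝ (Set.Icc (0 : ℝ) l) := uniqueDiffOn_Icc hl
    have hcont : ContinuousOn (iteratedDerivWithin 1 f (Set.Icc 0 l)) (Set.Icc 0 l) :=
      hf.continuousOn_iteratedDerivWithin (by norm_num) hud
    obtain ⟨hle, hnn⟩ := sup_abs_le_helper hl hcont
    have hdiff : DifferentiableOn ℝ f (Set.Icc 0 l) :=
      hf.differentiableOn (by norm_num)
    have hb : ∀ s ∈ Set.Icc (0 : ℝ) l, |derivWithin f (Set.Icc 0 l) s| ≤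
        sSup ((fun s => |iteratedDerivWithin 1 f (Set.Icc 0 l) s|) '' Set.Icc 0 l) := by
      intro s hs
      rw [← iteratedDerivWithin_one]
      exact hle s hs
    have := mvt_step hl hdiff hnn hb (hxmem 0) (hfx 0) t ht
    simpa [pow_one] using this
  | succ n IH =>
    intro l hl f hf x hxinj hxmem hfx t ht
    have hud : UniqueDiffOn ℝ (Set.Icc (0 : ℝ) l) := uniqueDiffOn_Icc hl
    -- sort the interpolation points
    set s : Finset ℝ := Finset.image x Finset.univ with hs
    have hcard : s.card = n + 2 := by
      rw [hs, Finset.card_image_of_injective _ hxinj, Finset.card_univ, Fintype.card_fin]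
    set e := s.orderIsoOfFin hcard with he
    set y : Fin (n + 2) → ℝ := fun i => (e i : ℝ) with hy
    have hymono : StrictMono y := fun i j hij => by
      exact_mod_cast e.strictMono hij
    have hymem : ∀ i, y i ∈ Set.Icc (0 : ℝ) l := by
      intro i
      obtain ⟨j, -, hj⟩ := Finset.mem_image.mp (e i).2
      show (e i : ℝ) ∈ _
      rw [← hj]; exact hxmem j
    have hyzero : ∀ i, f (y i) = 0 := by
      intro i
      obtain ⟨j, -, hj⟩ := Finset.mem_image.mp (e i).2
      show f (e i : ℝ) = 0
      rw [← hj]; exact hfx j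
    -- Rolle between consecutive points
    have hroll : ∀ i : Fin (n + 1), ∃ c ∈ Set.Ioo (y i.castSucc) (y i.succ),
        deriv f c = 0 := by
      intro i
      have hab : y i.castSucc < y i.succ := hymono (by
        simp [Fin.lt_def])
      exact exists_deriv_eq_zero hab
        (hf.continuousOn.mono (Set.Icc_subset_Icc (hymem i.castSucc).1 (hymem i.succ).2))
        (by rw [hyzero, hyzero])
    choose c hcIoo hczero using hroll
    set g : ℝ → ℝ := derivWithin f (Set.Icc 0 l) with hg
    have hcIoo0l : ∀ i, c i ∈ Set.Ioo (0 : ℝ) l := fun i =>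
      ⟨lt_of_le_of_lt (hymem i.castSucc).1 (hcIoo i).1,
        lt_of_lt_of_le (hcIoo i).2 (hymem i.succ).2⟩
    have hcmem : ∀ i, c i ∈ Set.Icc (0 : ℝ) l := fun i =>
      ⟨(hcIoo0l i).1.le, (hcIoo0l i).2.le⟩
    have hgzero : ∀ i, g (c i) = 0 := by
      intro i
      rw [hg, derivWithin_of_mem_nhds (Icc_mem_nhds (hcIoo0l i).1 (hcIoo0l i).2)]
      exact hczero i
    have hcmono : StrictMono c := by
      intro i j hij
      calc c i < y i.succ := (hcIoo i).2
        _ ≤ y j.castSucc := hymono.monotone (by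
            simp only [Fin.le_def, Fin.val_succ, Fin.coe_castSucc]
            exact hij)
        _ < c j := (hcIoo j).1
    have hcinj : Function.Injective c := hcmono.injective
    have hgC : ContDiffOn ℝ (n + 1) g (Set.Icc 0 l) :=
      hf.derivWithin hud (by exact_mod_cast le_refl ((n : ℕ∞) + 2))
    have hIH := IH l hl g hgC c hcinj hcmem hgzero
    -- rewrite the iterated derivative of g
    have hiter : ∀ u ∈ Set.Icc (0 : ℝ) l,
        iteratedDerivWithin (n + 1) g (Set.Icc 0 l) u =
          iteratedDerivWithin (n + 2) f (Set.Icc 0 l) u := by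
      intro u hu
      rw [hg, ← iteratedDerivWithin_succ']
    have himg : ((fun u => |iteratedDerivWithin (n + 1) g (Set.Icc 0 l) u|) '' Set.Icc 0 l) =
        ((fun u => |iteratedDerivWithin (n + 2) f (Set.Icc 0 l) u|) '' Set.Icc 0 l) :=
      Set.image_congr fun u hu => by rw [hiter u hu]
    rw [himg] at hIH
    set M := sSup ((fun u => |iteratedDerivWithin (n + 2) f (Set.Icc 0 l) u|) '' Set.Icc 0 l)
      with hM
    have hcont : ContinuousOn (iteratedDerivWithin (n + 2) f (Set.Icc 0 l)) (Set.Icc 0 l) :=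
      hf.continuousOn_iteratedDerivWithin (by norm_cast) hud
    obtain ⟨_, hMnn⟩ := sup_abs_le_helper hl hcont
    have hCnn : 0 ≤ l ^ (n + 1) * M := mul_nonneg (pow_nonneg hl.le _) hMnn
    have hdiff : DifferentiableOn ℝ f (Set.Icc 0 l) := hf.differentiableOn (by
      simp)
    have hb : ∀ u ∈ Set.Icc (0 : ℝ) l,
        |derivWithin f (Set.Icc 0 l) u| ≤ l ^ (n + 1) * M := fun u hu => hIH u hu
    have := mvt_step hl hdiff hCnn hb (hxmem 0) (hfx 0) t ht
    calc |f t| ≤ l * (l ^ (n + 1) * M) := this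
      _ = l ^ (n + 2) * M := by ring

/-- If `f : [0,l] → ℝ` is of class `C^{k+1}` and vanishes at `k+1` pairwise
distinct points of `[0,l]`, then
`sup_{[0,l]} |f| ≤ l^{k+1} · sup_{[0,l]} |f^{(k+1)}|`. -/
theorem sup_interp_estimate (k : ℕ) (l : ℝ) (hl : 0 < l) (f : ℝ → ℝ)
    (hf : ContDiffOn ℝ (k + 1) f (Set.Icc 0 l))
    (x : Fin (k + 1) → ℝ) (hxinj : Function.Injective x)
    (hxmem : ∀ i, x i ∈ Set.Icc (0 : ℝ) l) (hfx : ∀ i, f (x i) = 0) :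
    ∀ t ∈ Set.Icc (0 : ℝ) l,
      |f t| ≤ l ^ (k + 1) *
        sSup ((fun s => |iteratedDerivWithin (k + 1) f (Set.Icc 0 l) s|) '' Set.Icc 0 l) := by
  exact sup_interp_aux k l hl f hf x hxinj hxmem hfx
end

section
/- Let k be a natural number and let K₁, K₂ be compact subsets of ℝ² with K₁ having nonempty interior. There exists a constant C > 0 such that for every h > 0, every x₀ ∈ ℝ², and every real polynomial p in two variables of total degree at most k, one has sup_{x ∈ x₀ + h·K₂} |p(x)| ≤ C · h⁻¹ · (∫_{x₀ + h·K₁} p(x)² dx)^{1/2}, where x₀ + h·K := {x₀ + h·y : y ∈ K} and the integral is with respect to two-dimensional Lebesgue measure. -/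
open MeasureTheory

namespace PolyAux

noncomputable section

local notation "E2" => (Fin 2 → ℝ)

lemma analytic_eval (p : MvPolynomial (Fin 2) ℝ) :
    AnalyticOnNhd ℝ (fun x : E2 => MvPolynomial.eval x p) Set.univ := by
  simpa using AnalyticOnNhd.eval_continuousLinearMap
    (ContinuousLinearMap.id ℝ E2) p

lemma exists_ne_zero_on_open {p : MvPolynomial (Fin 2) ℝ} (hp : p ≠ 0)
    {U : Set E2} (hU : IsOpen U) (hne : U.Nonempty) :
    ∃ x ∈ U, MvPolynomial.eval x p ≠ 0 := by
  by_contra hcon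
  push_neg at hcon
  obtain ⟨z₀, hz₀⟩ := hne
  have heq : Set.EqOn (fun x : E2 => MvPolynomial.eval x p) 0 Set.univ := by
    apply (analytic_eval p).eqOn_zero_of_preconnected_of_eventuallyEq_zero
      isPreconnected_univ (Set.mem_univ z₀)
    filter_upwards [hU.mem_nhds hz₀] with x hx using hcon x hx
  exact hp (MvPolynomial.funext (fun x => by simpa using heq (Set.mem_univ x)))

end

end PolyAux

open MeasureTheory

namespace PolyAux2

lemma integral_sq_pos {K₁ : Set (Fin 2 → ℝ)} (hK₁c : IsCompact K₁)
    (hK₁i : (interior K₁).Nonempty) {p : MvPolynomial (Fin 2) ℝ} (hp : p ≠ 0) :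
    0 < ∫ z in K₁, (MvPolynomial.eval z p) ^ 2 := by
  obtain ⟨x₁, hx₁U, hx₁⟩ := PolyAux.exists_ne_zero_on_open hp isOpen_interior hK₁i
  set f : (Fin 2 → ℝ) → ℝ := fun z => (MvPolynomial.eval z p) ^ 2 with hf
  have hfc : Continuous f := (MvPolynomial.continuous_eval p).pow 2
  have hfx₁ : 0 < f x₁ := by positivity
  set ε := f x₁ / 2 with hε
  have hεpos : 0 < ε := by positivity
  set U : Set (Fin 2 → ℝ) := interior K₁ ∩ f ⁻¹' (Set.Ioi ε) with hU
  have hUopen : IsOpen U := isOpen_interior.inter (isOpen_Ioi.preimage hfc)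
  have hx₁U' : x₁ ∈ U := ⟨hx₁U, by simp [hε]; linarith⟩
  have hUK : U ⊆ K₁ := (Set.inter_subset_left).trans interior_subset
  have hint : IntegrableOn f K₁ := hfc.continuousOn.integrableOn_compact hK₁c
  have hUne : volume U ≠ ⊤ :=
    (lt_of_le_of_lt (measure_mono hUK) hK₁c.measure_lt_top).ne
  have hUpos : 0 < volume U := hUopen.measure_pos volume ⟨x₁, hx₁U'⟩
  have h1 : ε * (volume U).toReal ≤ ∫ z in U, f z := by
    apply setIntegral_ge_of_const_le_real hUopen.measurableSet hUne
    · exact fun x hx => le_of_lt hx.2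
    · exact hint.mono_set hUK
  have h2 : ∫ z in U, f z ≤ ∫ z in K₁, f z := by
    apply setIntegral_mono_set hint
    · exact Filter.Eventually.of_forall (fun x => by positivity)
    · exact HasSubset.Subset.eventuallyLE hUK
  have h3 : 0 < ε * (volume U).toReal :=
    mul_pos hεpos (ENNReal.toReal_pos hUpos.ne' hUne)
  linarith

end PolyAux2
namespace PolyAux3

open MvPolynomial

noncomputable section

set_option synthInstance.maxHeartbeats 800000 in
set_option maxHeartbeats 1600000 in
lemma lemA (k : ℕ) (K₁ K₂ : Set (Fin 2 → ℝ)) (hK₁c : IsCompact K₁) (hK₂c : IsCompact K₂)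
    (hK₁i : (interior K₁).Nonempty) :
    ∃ C : ℝ, 0 < C ∧ ∀ p : MvPolynomial (Fin 2) ℝ, p.totalDegree ≤ k →
      ∀ x ∈ K₂, |MvPolynomial.eval x p| ≤
        C * Real.sqrt (∫ z in K₁, (MvPolynomial.eval z p) ^ 2) := by
  classical
  set V := MvPolynomial.restrictTotalDegree (Fin 2) ℝ k with hV
  haveI : Module.Finite ℝ V := inferInstance
  haveI : Nontrivial V := by
    refine ⟨⟨1, ?_⟩, 0, ?_⟩
    · rw [MvPolynomial.mem_restrictTotalDegree]
      simp [MvPolynomial.totalDegree_one]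
    · intro hcon
      have : (1 : MvPolynomial (Fin 2) ℝ) = 0 := congrArg Subtype.val hcon
      exact one_ne_zero this
  set n := Module.finrank ℝ V with hn
  have hnpos : 0 < n := Module.finrank_pos
  haveI : Nonempty (Fin n) := Fin.pos_iff_nonempty.mp hnpos
  set b : Module.Basis (Fin n) ℝ V := Module.finBasis ℝ V with hb
  set g : Fin n → MvPolynomial (Fin 2) ℝ := fun i => ((b i : V) : MvPolynomial (Fin 2) ℝ) with hg
  set f : Fin n → (Fin 2 → ℝ) → ℝ := fun i x => MvPolynomial.eval x (g i) with hf
  have hfc : ∀ i, Continuous (f i) := fun i => MvPolynomial.continuous_eval _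
  -- bounds on K₂
  choose M hM using fun i => hK₂c.exists_bound_of_continuousOn (hfc i).continuousOn
  set A : ℝ := (∑ i, |M i|) + 1 with hA
  have hApos : 0 < A := by positivity
  -- Gram matrix
  set a : Fin n → Fin n → ℝ := fun i j => ∫ z in K₁, f i z * f j z with ha
  set G : (Fin n → ℝ) → ℝ := fun c => ∑ i, ∑ j, c i * c j * a i j with hG
  -- key integral identity
  have hint : ∀ (i j : Fin n), IntegrableOn (fun z => f i z * f j z) K₁ :=
    fun i j => (((hfc i).mul (hfc j)).continuousOn).integrableOn_compact hK₁c
  have eval_sum : ∀ (c : Fin n → ℝ) (z : Fin 2 → ℝ),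
      MvPolynomial.eval z (∑ i, c i • g i) = ∑ i, c i * f i z := by
    intro c z
    rw [map_sum]
    exact Finset.sum_congr rfl fun i _ => MvPolynomial.smul_eval _ _ _
  have hGint : ∀ c : Fin n → ℝ,
      (∫ z in K₁, (MvPolynomial.eval z (∑ i, c i • g i)) ^ 2) = G c := by
    intro c
    have h1 : ∀ z : Fin 2 → ℝ, (MvPolynomial.eval z (∑ i, c i • g i)) ^ 2
        = ∑ i, ∑ j, (c i * c j) * (f i z * f j z) := by
      intro z
      rw [eval_sum, sq, Finset.sum_mul_sum]
      exact Finset.sum_congr rfl fun i _ => Finset.sum_congr rfl fun j _ => by ring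
    simp_rw [h1]
    rw [integral_finset_sum]
    · refine Finset.sum_congr rfl fun i _ => ?_
      rw [integral_finset_sum]
      · refine Finset.sum_congr rfl fun j _ => ?_
        rw [MeasureTheory.integral_const_mul]
      · exact fun j _ => ((hint i j).const_mul _)
    · intro i _
      exact integrable_finset_sum _ (fun j _ => ((hint i j).const_mul _))
  -- continuity of G
  have hGc : Continuous G := by
    apply continuous_finset_sum
    intro i _
    apply continuous_finset_sum
    intro j _
    exact (((continuous_apply i).mul (continuous_apply j)).mul continuous_const)
  -- homogeneity
  have hGhom : ∀ (t : ℝ) (c : Fin n → ℝ), G (t • c) = t ^ 2 * G c := by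
    intro t c
    simp only [hG, Pi.smul_apply, smul_eq_mul, Finset.mul_sum]
    exact Finset.sum_congr rfl fun i _ => Finset.sum_congr rfl fun j _ => by ring
  -- positivity of G on nonzero c
  have hGpos : ∀ c : Fin n → ℝ, c ≠ 0 → 0 < G c := by
    intro c hc
    rw [← hGint c]
    apply PolyAux2.integral_sq_pos hK₁c hK₁i
    intro hq0
    apply hc
    have hsum : (∑ i, c i • b i : V) = 0 := by
      apply Subtype.val_injective
      push_cast
      simpa [hg] using hq0
    have := Fintype.linearIndependent_iff.mp b.linearIndependent c hsum
    funext i; exact this i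
  -- min of G on sphere
  obtain ⟨c₀, hc₀S, hc₀min⟩ :=
    (isCompact_sphere (0 : Fin n → ℝ) 1).exists_isMinOn
      (NormedSpace.sphere_nonempty.mpr zero_le_one) hGc.continuousOn
  set m := G c₀ with hm
  have hc₀norm : ‖c₀‖ = 1 := by simpa using hc₀S
  have hmpos : 0 < m := by
    apply hGpos
    intro h0
    rw [h0] at hc₀norm
    simp at hc₀norm
  have hGlow : ∀ c : Fin n → ℝ, m * ‖c‖ ^ 2 ≤ G c := by
    intro c
    rcases eq_or_ne c 0 with rfl | hc
    · simp [hG]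
    · have hnc : (0:ℝ) < ‖c‖ := norm_pos_iff.mpr hc
      have hu : ‖(‖c‖⁻¹ • c)‖ = 1 := by
        rw [norm_smul, norm_inv, norm_norm, inv_mul_cancel₀ hnc.ne']
      have h1 : m ≤ G (‖c‖⁻¹ • c) := hc₀min (by simpa using hu)
      have h2 : G (‖c‖⁻¹ • c) = (‖c‖⁻¹) ^ 2 * G c := hGhom _ _
      rw [h2] at h1
      have := mul_le_mul_of_nonneg_left h1 (le_of_lt (by positivity : (0:ℝ) < ‖c‖ ^ 2))
      calc m * ‖c‖ ^ 2 = ‖c‖ ^ 2 * m := by ring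
        _ ≤ ‖c‖ ^ 2 * ((‖c‖⁻¹) ^ 2 * G c) := this
        _ = G c := by field_simp
  refine ⟨A / Real.sqrt m, by positivity, ?_⟩
  intro p hp x hx
  set P : V := ⟨p, (MvPolynomial.mem_restrictTotalDegree _ _ _).mpr hp⟩ with hP
  set c : Fin n → ℝ := fun i => b.repr P i with hc
  have hrepr : (∑ i, c i • g i) = p := by
    have h2 : ((∑ i, (b.repr P) i • b i : V) : MvPolynomial (Fin 2) ℝ) = p := by
      rw [b.sum_repr P]
    rw [← h2]
    push_cast
    rfl
  have hGc' : (∫ z in K₁, (MvPolynomial.eval z p) ^ 2) = G c := by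
    rw [← hrepr]; exact hGint c
  -- pointwise bound
  have hbound : |MvPolynomial.eval x p| ≤ A * ‖c‖ := by
    rw [← hrepr, eval_sum]
    calc |∑ i, c i * f i x| ≤ ∑ i, |c i * f i x| := Finset.abs_sum_le_sum_abs _ _
      _ ≤ ∑ i, ‖c‖ * |M i| := by
          apply Finset.sum_le_sum
          intro i _
          rw [abs_mul]
          apply mul_le_mul
          · exact norm_le_pi_norm c i
          · exact le_trans (hM i x hx) (le_abs_self _)
          · exact abs_nonneg _
          · exact norm_nonneg _
      _ = (∑ i, |M i|) * ‖c‖ := by rw [← Finset.mul_sum, mul_comm]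
      _ ≤ A * ‖c‖ := by
          apply mul_le_mul_of_nonneg_right _ (norm_nonneg _)
          simp [hA]
  -- lower bound for sqrt integral
  have hsq : Real.sqrt m * ‖c‖ ≤ Real.sqrt (∫ z in K₁, (MvPolynomial.eval z p) ^ 2) := by
    rw [hGc']
    have : Real.sqrt (m * ‖c‖ ^ 2) ≤ Real.sqrt (G c) := Real.sqrt_le_sqrt (hGlow c)
    rwa [Real.sqrt_mul hmpos.le, Real.sqrt_sq (norm_nonneg _)] at this
  calc |MvPolynomial.eval x p| ≤ A * ‖c‖ := hbound
    _ = (A / Real.sqrt m) * (Real.sqrt m * ‖c‖) := by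
        field_simp
    _ ≤ (A / Real.sqrt m) * Real.sqrt (∫ z in K₁, (MvPolynomial.eval z p) ^ 2) := by
        apply mul_le_mul_of_nonneg_left hsq (by positivity)

end

end PolyAux3
namespace PolyAux4

open MvPolynomial MeasureTheory

lemma td_bind (q : Fin 2 → MvPolynomial (Fin 2) ℝ) (hq : ∀ i, (q i).totalDegree ≤ 1)
    (p : MvPolynomial (Fin 2) ℝ) :
    (MvPolynomial.bind₁ q p).totalDegree ≤ p.totalDegree := by
  conv_lhs => rw [p.as_sum]
  rw [map_sum]
  refine (MvPolynomial.totalDegree_finset_sum _ _).trans ?_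
  apply Finset.sup_le
  intro d hd
  have hmon : (MvPolynomial.bind₁ q) (MvPolynomial.monomial d (MvPolynomial.coeff d p))
      = MvPolynomial.C (MvPolynomial.coeff d p) * ∏ i ∈ d.support, q i ^ d i := by
    rw [MvPolynomial.bind₁, MvPolynomial.aeval_monomial, MvPolynomial.algebraMap_eq,
      Finsupp.prod]
  rw [hmon]
  refine (MvPolynomial.totalDegree_mul _ _).trans ?_
  rw [MvPolynomial.totalDegree_C, zero_add]
  refine (MvPolynomial.totalDegree_finset_prod _ _).trans ?_
  calc ∑ i ∈ d.support, (q i ^ d i).totalDegree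
      ≤ ∑ i ∈ d.support, d i * 1 := Finset.sum_le_sum (fun i _ =>
        (MvPolynomial.totalDegree_pow _ _).trans (Nat.mul_le_mul_left _ (hq i)))
    _ = ∑ i ∈ d.support, d i := by simp
    _ ≤ p.totalDegree := MvPolynomial.le_totalDegree hd

lemma td_affine (x₀ : Fin 2 → ℝ) (h : ℝ) (i : Fin 2) :
    (MvPolynomial.C (x₀ i) + MvPolynomial.C h * MvPolynomial.X i :
      MvPolynomial (Fin 2) ℝ).totalDegree ≤ 1 := by
  refine (MvPolynomial.totalDegree_add _ _).trans ?_
  apply max_le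
  · simp [MvPolynomial.totalDegree_C]
  · refine (MvPolynomial.totalDegree_mul _ _).trans ?_
    simp [MvPolynomial.totalDegree_C, MvPolynomial.totalDegree_X]

end PolyAux4

open MeasureTheory

theorem poly_scaled_inverse_estimate' (k : ℕ) (K₁ K₂ : Set (Fin 2 → ℝ))
    (hK₁c : IsCompact K₁) (hK₂c : IsCompact K₂) (hK₁i : (interior K₁).Nonempty) :
    ∃ C : ℝ, 0 < C ∧ ∀ h : ℝ, 0 < h → ∀ x₀ : Fin 2 → ℝ,
      ∀ p : MvPolynomial (Fin 2) ℝ, p.totalDegree ≤ k →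
        ∀ x ∈ (fun y => x₀ + h • y) '' K₂,
          |MvPolynomial.eval x p| ≤
            C * h⁻¹ *
              Real.sqrt (∫ z in (fun y => x₀ + h • y) '' K₁, (MvPolynomial.eval z p) ^ 2) := by
  obtain ⟨C, hC, hmain⟩ := PolyAux3.lemA k K₁ K₂ hK₁c hK₂c hK₁i
  refine ⟨C, hC, ?_⟩
  intro h hh x₀ p hp x hx
  obtain ⟨y, hyK₂, rfl⟩ := hx
  set gσ : Fin 2 → MvPolynomial (Fin 2) ℝ :=
    fun i => MvPolynomial.C (x₀ i) + MvPolynomial.C h * MvPolynomial.X i with hgσ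
  set q := MvPolynomial.bind₁ gσ p with hq
  have hqdeg : q.totalDegree ≤ k :=
    le_trans (PolyAux4.td_bind gσ (fun i => PolyAux4.td_affine x₀ h i) p) hp
  have heval : ∀ z : Fin 2 → ℝ,
      MvPolynomial.eval z q = MvPolynomial.eval (x₀ + h • z) p := by
    intro z
    have e1 : MvPolynomial.eval z q
        = MvPolynomial.eval (fun i => MvPolynomial.eval z (gσ i)) p :=
      MvPolynomial.eval₂Hom_bind₁ (RingHom.id ℝ) z gσ p
    have harg : (fun i => MvPolynomial.eval z (gσ i)) = x₀ + h • z := by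
      funext i; simp [hgσ]
    rw [e1, harg]
  have hdet : (h • ContinuousLinearMap.id ℝ (Fin 2 → ℝ)).det = h ^ 2 := by
    rw [ContinuousLinearMap.det]
    simp only [ContinuousLinearMap.coe_smul, ContinuousLinearMap.coe_id]
    rw [LinearMap.det_smul, LinearMap.det_id, Module.finrank_fin_fun, mul_one]
  have hchg : (∫ z in (fun y => x₀ + h • y) '' K₁, (MvPolynomial.eval z p) ^ 2)
      = h ^ 2 * ∫ z in K₁, (MvPolynomial.eval z q) ^ 2 := by
    have hFD : ∀ z ∈ K₁, HasFDerivWithinAt (fun y : Fin 2 → ℝ => x₀ + h • y)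
        ((fun _ => h • ContinuousLinearMap.id ℝ (Fin 2 → ℝ)) z) K₁ z := by
      intro z _
      exact (((hasFDerivAt_id z).const_smul h).const_add x₀).hasFDerivWithinAt
    have hinj : Set.InjOn (fun y : Fin 2 → ℝ => x₀ + h • y) K₁ := by
      intro a _ b _ hab
      have h2 := add_left_cancel hab
      exact smul_right_injective _ hh.ne' h2
    rw [integral_image_eq_integral_abs_det_fderiv_smul volume hK₁c.measurableSet hFD hinj
      (fun z => (MvPolynomial.eval z p) ^ 2)]
    rw [← MeasureTheory.integral_const_mul]
    apply MeasureTheory.setIntegral_congr_fun hK₁c.measurableSet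
    intro z _
    simp only [hdet, smul_eq_mul, heval z,
      abs_of_pos (show (0:ℝ) < h ^ 2 by positivity)]
  have hkey := hmain q hqdeg y hyK₂
  rw [heval y] at hkey
  calc |MvPolynomial.eval (x₀ + h • y) p|
      ≤ C * Real.sqrt (∫ z in K₁, (MvPolynomial.eval z q) ^ 2) := hkey
    _ = C * h⁻¹ * Real.sqrt (∫ z in (fun y => x₀ + h • y) '' K₁,
          (MvPolynomial.eval z p) ^ 2) := by
        rw [hchg, Real.sqrt_mul (by positivity : (0:ℝ) ≤ h ^ 2),
          Real.sqrt_sq hh.le]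
        field_simp


/-- Scaled inverse estimate: for compact `K₁, K₂ ⊆ ℝ²` with `K₁` having nonempty
interior, there is `C > 0` such that for all `h > 0`, `x₀ ∈ ℝ²` and every
bivariate polynomial `p` of total degree at most `k`,
`sup_{x₀ + h·K₂} |p| ≤ C h⁻¹ (∫_{x₀ + h·K₁} p²)^{1/2}`. -/
theorem poly_scaled_inverse_estimate (k : ℕ) (K₁ K₂ : Set (Fin 2 → ℝ))
    (hK₁c : IsCompact K₁) (hK₂c : IsCompact K₂) (hK₁i : (interior K₁).Nonempty) :
    ∃ C : ℝ, 0 < C ∧ ∀ h : ℝ, 0 < h → ∀ x₀ : Fin 2 → ℝ,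
      ∀ p : MvPolynomial (Fin 2) ℝ, p.totalDegree ≤ k →
        ∀ x ∈ (fun y => x₀ + h • y) '' K₂,
          |MvPolynomial.eval x p| ≤
            C * h⁻¹ *
              Real.sqrt (∫ z in (fun y => x₀ + h • y) '' K₁, (MvPolynomial.eval z p) ^ 2) := by
  exact poly_scaled_inverse_estimate' k K₁ K₂ hK₁c hK₂c hK₁i
end
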